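/- The number of labelings B ∈ S(n,w) with exactly W discordant pairs with respect to a fixed injective score function equals Q(W,n,w) − Q(W−1,n,w), where Q satisfies the recursion Q(W,n,w) = Q(W,n−1,w) + Q(W−n+w,n−1,w−1), with Q(W,n,w) = 0 for W < 0, Q(W,n,w) = C(n,w) for W ≥ w(n−w), and Q(W,n,w) = W+1 when w = 1 or n−w = 1 (and 0 ≤ W ≤ w(n−w)); equivalently, Q(W,n,w) counts labelings with at most W discordant pairs. -/

import Mathlib

def weight {n : ℕ} (B : Fin n → Bool) : ℕ :=
  (Finset.univ.filter (fun i => B i = true)).card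

def hamming {n : ℕ} (B B' : Fin n → Bool) : ℕ :=
  (Finset.univ.filter (fun i => B i ≠ B' i)).card

theorem hamming_comm {n : ℕ} (B B' : Fin n → Bool) : hamming B B' = hamming B' B := by
  unfold hamming; congr 1; ext i; simp [ne_comm]

def johnson (n w : ℕ) : SimpleGraph {B : Fin n → Bool // weight B = w} where
  Adj B B' := hamming B.1 B'.1 = 2
  symm := ⟨fun B B' h => by simpa [hamming_comm] using h⟩
  loopless := ⟨fun B h => by simp [hamming] at h⟩

structure GraphOrientation {V : Type*} (G : SimpleGraph V) where
  dir : V → V → Prop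
  dir_adj : ∀ u v, dir u v → G.Adj u v
  total : ∀ u v, G.Adj u v → dir u v ∨ dir v u
  asymm : ∀ u v, dir u v → ¬ dir v u

noncomputable def outdeg {V : Type*} {G : SimpleGraph V} (Λ : GraphOrientation G) (v : V) : ℕ :=
  {u | Λ.dir v u}.ncard

noncomputable def Lmax (W n w : ℕ) : ℕ :=
  sSup {k | ∃ Λ : GraphOrientation (johnson n w), k = {B | outdeg Λ B ≤ W}.ncard}

noncomputable def discord {n : ℕ} (f : Fin n → ℝ) (B : Fin n → Bool) : ℕ :=
  (Finset.univ.filter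
    (fun p : Fin n × Fin n => B p.1 = true ∧ B p.2 = false ∧ f p.1 < f p.2)).card

def Q : ℕ → ℤ → ℕ → ℕ
  | n, W, w =>
    if W < 0 then 0
    else if ((w * (n - w) : ℕ) : ℤ) ≤ W then n.choose w
    else if w = 1 ∨ n - w = 1 then (W + 1).toNat
    else match n, w with
      | 0, _ => 0
      | _ + 1, 0 => 0
      | n + 1, w + 1 => Q n W (w + 1) + Q n (W - (n + 1) + (w + 1)) w


open Finset

def dsc {n : ℕ} (B : Fin n → Bool) : ℕ :=
  (Finset.univ.filter
    (fun p : Fin n × Fin n => B p.1 = true ∧ B p.2 = false ∧ p.1 < p.2)).card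

def zw {n : ℕ} (B : Fin n → Bool) : ℕ :=
  (Finset.univ.filter (fun i => B i = false)).card

lemma weight_add_zw {n : ℕ} (B : Fin n → Bool) : weight B + zw B = n := by
  have := Finset.card_filter_add_card_filter_not (s := (univ : Finset (Fin n)))
    (fun i => B i = true)
  simpa [weight, zw] using this

lemma weight_cons {n : ℕ} (b : Bool) (B : Fin n → Bool) :
    weight (Fin.cons b B) = (if b = true then 1 else 0) + weight B := by
  simp only [weight, Finset.card_filter, Fin.sum_univ_succ, Fin.cons_zero, Fin.cons_succ]

lemma dsc_cons {n : ℕ} (b : Bool) (B : Fin n → Bool) :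
    dsc (Fin.cons b B) = (if b = true then zw B else 0) + dsc B := by
  simp only [dsc, zw, Finset.card_filter, ← Finset.univ_product_univ, Finset.sum_product]
  rw [Fin.sum_univ_succ]
  simp only [Fin.cons_zero, Fin.cons_succ]
  rw [Fin.sum_univ_succ]
  simp only [Fin.cons_zero, Fin.cons_succ, lt_self_iff_false, and_false, if_false]
  have e1 : ∀ j : Fin n, (b = true ∧ B j = false ∧ (0:Fin (n+1)) < j.succ) ↔ (b = true ∧ B j = false) := by
    intro j; simp [Fin.succ_pos]
  have e2 : (∑ j : Fin n, if b = true ∧ B j = false ∧ (0:Fin (n+1)) < j.succ then 1 else 0)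
      = if b = true then ∑ j : Fin n, (if B j = false then 1 else 0) else 0 := by
    by_cases hb : b = true <;> simp [hb, Fin.succ_pos]
  rw [e2]
  congr 1
  · by_cases hb : b = true <;> simp [hb]
  · refine Finset.sum_congr rfl (fun i _ => ?_)
    rw [Fin.sum_univ_succ]
    simp only [Fin.cons_zero, Fin.cons_succ]
    have : ¬ (i.succ < (0 : Fin (n+1))) := by simp [Fin.not_lt_zero]
    simp only [this, and_false, if_false, zero_add]
    refine Finset.sum_congr rfl (fun j _ => ?_)
    congr 1
    simp [Fin.succ_lt_succ_iff]

lemma dsc_le {n : ℕ} (B : Fin n → Bool) : dsc B ≤ weight B * zw B := by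
  have : weight B * zw B =
      ∑ i : Fin n, ∑ j : Fin n, (if B i = true then 1 else 0) * (if B j = false then 1 else 0) := by
    rw [← Finset.sum_mul_sum, weight, zw, Finset.card_filter, Finset.card_filter]
  rw [this, dsc, Finset.card_filter, ← Finset.univ_product_univ, Finset.sum_product]
  refine Finset.sum_le_sum (fun i _ => Finset.sum_le_sum (fun j _ => ?_))
  show (if B i = true ∧ B j = false ∧ i < j then 1 else 0)
      ≤ (if B i = true then 1 else 0) * (if B j = false then 1 else 0)
  by_cases h : B i = true ∧ B j = false ∧ i < j
  · rw [if_pos h, if_pos h.1, if_pos h.2.1]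
  · rw [if_neg h]; positivity

lemma card_weight_eq {n w : ℕ} :
    ((univ : Finset (Fin n → Bool)).filter (fun B => weight B = w)).card = n.choose w := by
  have hc := Finset.card_powersetCard w (univ : Finset (Fin n))
  rw [Finset.card_univ, Fintype.card_fin] at hc
  rw [← hc]
  apply Finset.card_nbij' (fun B => univ.filter (fun i => B i = true))
    (fun s => fun i => decide (i ∈ s))
  · intro B hB
    simp only [Finset.mem_coe, Finset.mem_filter, Finset.mem_univ, true_and] at hB
    simp [Finset.mem_powersetCard, ← hB, weight]
  · intro s hs
    simp only [Finset.mem_coe, Finset.mem_powersetCard] at hs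
    simp only [Finset.mem_coe, Finset.mem_filter, Finset.mem_univ, true_and]
    simp only [Finset.mem_coe, Finset.mem_filter, Finset.mem_univ, true_and, weight]
    rw [← hs.2]
    congr 1
    ext i; simp
  · intro B _; funext i
    by_cases h : B i = true <;> simp [h]
  · intro s _
    ext i; simp

lemma card_val_ge {n a : ℕ} :
    ((univ : Finset (Fin n)).filter (fun q : Fin n => a ≤ (q : ℕ))).card = n - a := by
  have himg : (((univ : Finset (Fin n)).filter (fun q : Fin n => a ≤ (q : ℕ))).image Fin.val)
      = Finset.Ico a n := by
    ext k
    simp only [Finset.mem_image, Finset.mem_filter, Finset.mem_univ, true_and, Finset.mem_Ico]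
    constructor
    · rintro ⟨q, hq, rfl⟩; exact ⟨hq, q.isLt⟩
    · rintro ⟨h1, h2⟩; exact ⟨⟨k, h2⟩, h1, rfl⟩
  rw [← Nat.card_Ico a n, ← himg, Finset.card_image_of_injective _ Fin.val_injective]

lemma card_val_lt {n : ℕ} (i : Fin n) :
    ((univ : Finset (Fin n)).filter (fun q => q < i)).card = (i : ℕ) := by
  have himg : (((univ : Finset (Fin n)).filter (fun q => q < i)).image Fin.val)
      = Finset.range (i : ℕ) := by
    ext k
    simp only [Finset.mem_image, Finset.mem_filter, Finset.mem_univ, true_and,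
      Finset.mem_range, Fin.lt_def]
    constructor
    · rintro ⟨q, hq, rfl⟩; exact hq
    · intro h; exact ⟨⟨k, lt_trans h i.isLt⟩, h, rfl⟩
  rw [← Finset.card_range (i : ℕ), ← himg,
    Finset.card_image_of_injective _ Fin.val_injective]

lemma card_val_gt {n : ℕ} (i : Fin n) :
    ((univ : Finset (Fin n)).filter (fun q => i < q)).card = n - 1 - (i : ℕ) := by
  have : ((univ : Finset (Fin n)).filter (fun q => i < q))
      = ((univ : Finset (Fin n)).filter (fun q : Fin n => (i : ℕ) + 1 ≤ (q : ℕ))) := by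
    ext q
    simp only [Finset.mem_filter, Finset.mem_univ, true_and, Fin.lt_def]
    omega
  rw [this, card_val_ge]
  omega

def ind {n : ℕ} (i : Fin n) : Fin n → Bool := fun j => decide (j = i)
def coind {n : ℕ} (i : Fin n) : Fin n → Bool := fun j => !decide (j = i)

lemma weight_ind {n : ℕ} (i : Fin n) : weight (ind i) = 1 := by
  have : (univ.filter (fun j => ind i j = true)) = {i} := by
    ext j; simp [ind]
  rw [weight, this, Finset.card_singleton]

lemma weight_coind {n : ℕ} (i : Fin n) : weight (coind i) = n - 1 := by
  have : (univ.filter (fun j => coind i j = true)) = univ \ {i} := by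
    ext j; simp [coind]
  rw [weight, this, Finset.card_sdiff_of_subset (by simp), Finset.card_univ, Fintype.card_fin,
    Finset.card_singleton]

lemma dsc_ind {n : ℕ} (i : Fin n) : dsc (ind i) = n - 1 - (i : ℕ) := by
  rw [← card_val_gt i, dsc]
  apply Finset.card_nbij' Prod.snd (fun q => (i, q))
  · rintro ⟨p1, p2⟩ hp
    simp only [Finset.mem_coe, Finset.mem_filter, Finset.mem_univ, true_and, ind, decide_eq_true_eq] at hp ⊢
    rcases hp with ⟨h1, h2, h3⟩
    have : p1 = i := by simpa using h1
    exact this ▸ h3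
  · intro q hq
    simp only [Finset.mem_coe, Finset.mem_filter, Finset.mem_univ, true_and] at hq
    simp only [Finset.mem_coe, Finset.mem_filter, Finset.mem_univ, true_and]
    simp only [Finset.mem_coe, Finset.mem_filter, Finset.mem_univ, true_and, ind]
    refine ⟨by simp, ?_, hq⟩
    simp [Fin.ne_of_gt hq]
  · rintro ⟨p1, p2⟩ hp
    simp only [Finset.mem_coe, Finset.mem_filter, Finset.mem_univ, true_and, ind, decide_eq_true_eq] at hp
    have : p1 = i := by simpa using hp.1
    simp [this]
  · intro q _; rfl

lemma dsc_coind {n : ℕ} (i : Fin n) : dsc (coind i) = (i : ℕ) := by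
  rw [← card_val_lt i, dsc]
  apply Finset.card_nbij' Prod.fst (fun q => (q, i))
  · rintro ⟨p1, p2⟩ hp
    simp only [Finset.mem_coe, Finset.mem_filter, Finset.mem_univ, true_and] at hp ⊢
    simp only [Finset.mem_coe, Finset.mem_filter, Finset.mem_univ, true_and, coind] at hp ⊢
    rcases hp with ⟨h1, h2, h3⟩
    have : p2 = i := by simpa using h2
    exact this ▸ h3
  · intro q hq
    simp only [Finset.mem_coe, Finset.mem_filter, Finset.mem_univ, true_and] at hq
    simp only [Finset.mem_coe, Finset.mem_filter, Finset.mem_univ, true_and]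
    simp only [Finset.mem_coe, Finset.mem_filter, Finset.mem_univ, true_and, coind]
    refine ⟨?_, by simp, hq⟩
    simp [Fin.ne_of_lt hq]
  · rintro ⟨p1, p2⟩ hp
    simp only [Finset.mem_coe, Finset.mem_filter, Finset.mem_univ, true_and] at hp
    simp only [Finset.mem_coe, Finset.mem_filter, Finset.mem_univ, true_and, coind] at hp
    have : p2 = i := by simpa using hp.2.1
    simp [this]
  · intro q _; rfl

lemma eq_ind_of_weight_one {n : ℕ} {B : Fin n → Bool} (h : weight B = 1) :
    ∃ i, B = ind i := by
  rw [weight, Finset.card_eq_one] at h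
  obtain ⟨a, ha⟩ := h
  refine ⟨a, funext fun j => ?_⟩
  have : B j = true ↔ j = a := by
    have hmem : j ∈ filter (fun i => B i = true) univ ↔ B j = true := by simp
    rw [← hmem, ha, Finset.mem_singleton]
  cases hj : B j
  · simp only [ind]
    symm; simp only [Bool.false_eq, decide_eq_false_iff_not]
    intro hja; rw [← this] at hja; rw [hj] at hja; exact absurd hja (by simp)
  · have := this.mp hj
    simp [ind, this]

lemma eq_coind_of_zw_one {n : ℕ} {B : Fin n → Bool} (h : zw B = 1) :
    ∃ i, B = coind i := by
  rw [zw, Finset.card_eq_one] at h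
  obtain ⟨a, ha⟩ := h
  refine ⟨a, funext fun j => ?_⟩
  have : B j = false ↔ j = a := by
    have hmem : j ∈ filter (fun i => B i = false) univ ↔ B j = false := by simp
    rw [← hmem, ha, Finset.mem_singleton]
  cases hj : B j
  · have := this.mp hj
    simp [coind, this]
  · simp only [coind]
    symm; simp only [Bool.true_eq, Bool.not_eq_true', decide_eq_false_iff_not]
    intro hja; rw [← this] at hja; rw [hj] at hja; exact absurd hja (by simp)

lemma count_w1 {n : ℕ} {W : ℤ} (h0 : 0 ≤ W) (h1 : W < ((n - 1 : ℕ) : ℤ)) :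
    ((univ : Finset (Fin n → Bool)).filter
      (fun B => weight B = 1 ∧ (dsc B : ℤ) ≤ W)).card = (W + 1).toNat := by
  set t := W.toNat with ht
  have hWt : W = (t : ℤ) := (Int.toNat_of_nonneg h0).symm
  have htn : t < n - 1 := by omega
  have hcard : ((univ : Finset (Fin n)).filter
      (fun q : Fin n => (n - 1 - t) ≤ (q : ℕ))).card = t + 1 := by
    rw [card_val_ge]; omega
  have hgoal : (W + 1).toNat = t + 1 := by omega
  rw [hgoal, ← hcard]
  symm
  apply Finset.card_bij (fun q _ => ind q)
  · intro q hq
    simp only [Finset.mem_filter, Finset.mem_univ, true_and] at hq ⊢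
    refine ⟨weight_ind q, ?_⟩
    rw [dsc_ind, hWt]
    have := q.isLt
    omega
  · intro q hq q' hq' h
    have := congrFun h q
    simp only [ind, decide_eq_true_eq] at this
    simpa using this
  · intro B hB
    simp only [Finset.mem_filter, Finset.mem_univ, true_and] at hB
    obtain ⟨i, rfl⟩ := eq_ind_of_weight_one hB.1
    refine ⟨i, ?_, rfl⟩
    simp only [Finset.mem_filter, Finset.mem_univ, true_and]
    have hd := hB.2
    rw [dsc_ind, hWt] at hd
    have := i.isLt
    omega

lemma count_wlast {n : ℕ} {W : ℤ} (h0 : 0 ≤ W) (h1 : W < ((n - 1 : ℕ) : ℤ)) :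
    ((univ : Finset (Fin n → Bool)).filter
      (fun B => weight B = n - 1 ∧ (dsc B : ℤ) ≤ W)).card = (W + 1).toNat := by
  set t := W.toNat with ht
  have hWt : W = (t : ℤ) := (Int.toNat_of_nonneg h0).symm
  have htn : t < n - 1 := by omega
  have hsplit := Finset.card_filter_add_card_filter_not
    (s := (univ : Finset (Fin n))) (fun q : Fin n => t + 1 ≤ (q : ℕ))
  rw [card_val_ge, Finset.card_univ, Fintype.card_fin] at hsplit
  have hneg : ((univ : Finset (Fin n)).filter (fun q : Fin n => ¬(t + 1 ≤ (q : ℕ))))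
      = (univ : Finset (Fin n)).filter (fun q : Fin n => (q : ℕ) ≤ t) := by
    ext q
    simp only [Finset.mem_filter, Finset.mem_univ, true_and]
    omega
  rw [hneg] at hsplit
  have hcard : ((univ : Finset (Fin n)).filter (fun q : Fin n => (q : ℕ) ≤ t)).card = t + 1 := by
    omega
  have hgoal : (W + 1).toNat = t + 1 := by omega
  rw [hgoal, ← hcard]
  symm
  apply Finset.card_bij (fun q _ => coind q)
  · intro q hq
    simp only [Finset.mem_filter, Finset.mem_univ, true_and] at hq ⊢
    refine ⟨weight_coind q, ?_⟩
    rw [dsc_coind, hWt]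
    omega
  · intro q hq q' hq' h
    have := congrFun h q
    simp only [coind] at this
    by_contra hne
    have hq' : ¬ (q = q') := hne
    simp [hq'] at this
  · intro B hB
    simp only [Finset.mem_filter, Finset.mem_univ, true_and] at hB
    have hz : zw B = 1 := by
      have := weight_add_zw B
      have hn2 : 2 ≤ n := by omega
      omega
    obtain ⟨i, rfl⟩ := eq_coind_of_zw_one hz
    refine ⟨i, ?_, rfl⟩
    simp only [Finset.mem_filter, Finset.mem_univ, true_and]
    have hd := hB.2
    rw [dsc_coind, hWt] at hd
    omega

lemma card_filter_bool_prod {X : Type*} [Fintype X] [DecidableEq X]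
    (R : Bool × X → Prop) [DecidablePred R] :
    ((univ : Finset (Bool × X)).filter R).card
      = ((univ : Finset X).filter (fun x => R (false, x))).card
        + ((univ : Finset X).filter (fun x => R (true, x))).card := by
  have hinj : ∀ b : Bool, Function.Injective (Prod.mk (β := X) b) :=
    fun b a a' h => congrArg Prod.snd h
  have hU : (univ : Finset (Bool × X)).filter R
      = ((univ.filter fun x => R (false, x)).image (Prod.mk false))
        ∪ ((univ.filter fun x => R (true, x)).image (Prod.mk true)) := by
    ext ⟨b, x⟩
    cases b <;> simp
  rw [hU, Finset.card_union_of_disjoint, Finset.card_image_of_injective _ (hinj false),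
    Finset.card_image_of_injective _ (hinj true)]
  simp [Finset.disjoint_left]

lemma card_filter_succ {n : ℕ} (P : (Fin (n + 1) → Bool) → Prop) [DecidablePred P] :
    ((univ : Finset (Fin (n + 1) → Bool)).filter P).card
      = ((univ : Finset (Fin n → Bool)).filter (fun B => P (Fin.cons false B))).card
        + ((univ : Finset (Fin n → Bool)).filter (fun B => P (Fin.cons true B))).card := by
  rw [← card_filter_bool_prod (fun p => P (Fin.cons p.1 p.2))]
  apply Finset.card_nbij' (fun B => (B 0, Fin.tail B)) (fun p => Fin.cons p.1 p.2)
  · intro B hB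
    simp only [Finset.mem_coe, Finset.mem_filter, Finset.mem_univ, true_and] at hB ⊢
    rwa [Fin.cons_self_tail]
  · intro p hp
    simp only [Finset.mem_coe, Finset.mem_filter, Finset.mem_univ, true_and] at hp ⊢
    exact hp
  · intro B _; exact Fin.cons_self_tail B
  · intro p _; simp [Fin.tail_cons]

lemma count_eq_Q : ∀ (n w : ℕ) (W : ℤ),
    ((univ : Finset (Fin n → Bool)).filter
      (fun B => weight B = w ∧ (dsc B : ℤ) ≤ W)).card = Q n W w := by
  intro n
  induction n with
  | zero =>
    intro w W
    rw [Q.eq_def]; dsimp only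
    split_ifs with h1 h2 h3
    · rw [Finset.card_eq_zero, Finset.filter_eq_empty_iff]
      rintro B - ⟨-, hd⟩
      omega
    · rw [← card_weight_eq (n := 0) (w := w)]
      congr 1
      apply Finset.filter_congr
      intro B _
      simp only [and_iff_left_iff_imp]
      intro hw
      have hle := dsc_le B
      have hzw := weight_add_zw B
      have hz0 : zw B = 0 := by omega
      rw [hz0, Nat.mul_zero] at hle
      omega
    · exfalso
      simp only [Nat.zero_sub, Nat.mul_zero, Nat.cast_zero] at h2
      omega
    · exfalso
      simp only [Nat.zero_sub, Nat.mul_zero, Nat.cast_zero] at h2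
      omega
  | succ n ih =>
    intro w W
    rw [Q.eq_def]; dsimp only
    split_ifs with h1 h2 h3
    · rw [Finset.card_eq_zero, Finset.filter_eq_empty_iff]
      rintro B - ⟨-, hd⟩
      omega
    · rw [← card_weight_eq (n := n + 1) (w := w)]
      congr 1
      apply Finset.filter_congr
      intro B _
      simp only [and_iff_left_iff_imp]
      intro hw
      have hle := dsc_le B
      have hzw := weight_add_zw B
      have hz : zw B = n + 1 - w := by omega
      rw [hw, hz] at hle
      omega
    · rcases h3 with h3 | h3
      · subst h3
        apply count_w1 (by omega)
        have : (1 * (n + 1 - 1) : ℕ) = (n + 1 - 1 : ℕ) := by omega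
        rw [this] at h2
        omega
      · have hw : w = n := by omega
        have h2' : W < ((n + 1 - 1 : ℕ) : ℤ) := by
          have hx : (w * (n + 1 - w) : ℕ) = n := by
            rw [hw]
            have h1' : n + 1 - n = 1 := by omega
            rw [h1', Nat.mul_one]
          rw [hx] at h2
          omega
        rw [hw]
        have := count_wlast (n := n + 1) (W := W) (by omega) h2'
        simpa using this
    · -- recursion case
      have hw0 : w ≠ 0 := by
        rintro rfl
        simp only [Nat.zero_mul, Nat.cast_zero] at h2
        omega
      obtain ⟨w', rfl⟩ : ∃ w', w = w' + 1 := ⟨w - 1, by omega⟩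
      have hwn : w' ≤ n := by
        by_contra h
        have h0 : (n + 1 - (w' + 1) : ℕ) = 0 := by omega
        rw [h0, Nat.mul_zero] at h2
        simp only [Nat.cast_zero] at h2
        omega
      show _ = Q n W (w' + 1) + Q n (W - (↑n + 1) + (↑w' + 1)) w'
      have harg : W - (↑n + 1) + (↑w' + 1) = W - ((n - w' : ℕ) : ℤ) := by omega
      rw [harg]
      rw [card_filter_succ (fun B => weight B = w' + 1 ∧ (dsc B : ℤ) ≤ W)]
      congr 1
      · rw [← ih (w' + 1) W]
        congr 1
        apply Finset.filter_congr
        intro B _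
        rw [weight_cons, dsc_cons]
        simp
      · rw [← ih w' (W - ((n - w' : ℕ) : ℤ))]
        congr 1
        apply Finset.filter_congr
        intro B _
        rw [weight_cons, dsc_cons]
        simp only [eq_self_iff_true, if_true]
        constructor
        · rintro ⟨hwt, hd⟩
          have hwt' : weight B = w' := by omega
          have hz : zw B = n - w' := by have := weight_add_zw B; omega
          refine ⟨hwt', ?_⟩
          rw [hz] at hd
          push_cast at hd ⊢
          omega
        · rintro ⟨hwt, hd⟩
          have hz : zw B = n - w' := by have := weight_add_zw B; omega
          refine ⟨by omega, ?_⟩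
          rw [hz]
          push_cast at hd ⊢
          omega

lemma weight_comp {n : ℕ} (B : Fin n → Bool) (σ : Equiv.Perm (Fin n)) :
    weight (B ∘ σ) = weight B := by
  unfold weight
  apply Finset.card_equiv σ
  intro i
  simp

lemma discord_eq_dsc {n : ℕ} {f : Fin n → ℝ} {σ : Equiv.Perm (Fin n)}
    (hσ : StrictMono (f ∘ σ)) (B : Fin n → Bool) :
    discord f B = dsc (B ∘ σ) := by
  unfold discord dsc
  symm
  apply Finset.card_equiv (Equiv.prodCongr σ σ)
  rintro ⟨i, j⟩
  simp only [Finset.mem_filter, Finset.mem_univ, true_and, Equiv.prodCongr_apply,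
    Function.comp_apply, Prod.map]
  constructor
  · rintro ⟨h1, h2, h3⟩
    exact ⟨h1, h2, hσ h3⟩
  · rintro ⟨h1, h2, h3⟩
    exact ⟨h1, h2, hσ.lt_iff_lt.mp h3⟩

lemma transfer {n w : ℕ} (f : Fin n → ℝ) (hf : Function.Injective f)
    (P : ℕ → Prop) [DecidablePred P] :
    ((univ : Finset (Fin n → Bool)).filter (fun B => weight B = w ∧ P (discord f B))).card
      = ((univ : Finset (Fin n → Bool)).filter (fun B => weight B = w ∧ P (dsc B))).card := by
  set σ := Tuple.sort f with hσdef
  have hσ : StrictMono (f ∘ σ) :=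
    (Tuple.monotone_sort f).strictMono_of_injective (hf.comp σ.injective)
  apply Finset.card_nbij' (fun B => B ∘ σ) (fun B => B ∘ σ.symm)
  · intro B hB
    simp only [Finset.mem_coe, Finset.mem_filter, Finset.mem_univ, true_and] at hB ⊢
    rcases hB with ⟨h1, h2⟩
    refine ⟨by rw [weight_comp]; exact h1, ?_⟩
    rwa [← discord_eq_dsc hσ]
  · intro B hB
    simp only [Finset.mem_coe, Finset.mem_filter, Finset.mem_univ, true_and] at hB ⊢
    rcases hB with ⟨h1, h2⟩
    refine ⟨by rw [weight_comp]; exact h1, ?_⟩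
    have : (B ∘ σ.symm) ∘ σ = B := by
      funext i; simp
    rw [discord_eq_dsc hσ, this]
    exact h2
  · intro B _
    funext i; simp
  · intro B _
    funext i; simp


theorem stmt19 (n w : ℕ) (f : Fin n → ℝ) (hf : Function.Injective f) (W : ℕ) :
    {B : Fin n → Bool | weight B = w ∧ discord f B ≤ W}.ncard = Q n (W : ℤ) w ∧
    {B : Fin n → Bool | weight B = w ∧ discord f B = W}.ncard =
      Q n (W : ℤ) w - Q n ((W : ℤ) - 1) w := by
  classical
  constructor
  · have hset : {B : Fin n → Bool | weight B = w ∧ discord f B ≤ W}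
        = ↑((univ : Finset (Fin n → Bool)).filter (fun B => weight B = w ∧ discord f B ≤ W)) := by
      ext B; simp
    rw [hset, Set.ncard_coe_finset, transfer f hf (fun d => d ≤ W), ← count_eq_Q n w (W : ℤ)]
    congr 1
    apply Finset.filter_congr
    intro B _
    constructor
    · rintro ⟨h1, h2⟩; exact ⟨h1, by omega⟩
    · rintro ⟨h1, h2⟩; exact ⟨h1, by omega⟩
  · have hset : {B : Fin n → Bool | weight B = w ∧ discord f B = W}
        = ↑((univ : Finset (Fin n → Bool)).filter (fun B => weight B = w ∧ discord f B = W)) := by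
      ext B; simp
    rw [hset, Set.ncard_coe_finset, transfer f hf (fun d => d = W)]
    have heq : ((univ : Finset (Fin n → Bool)).filter (fun B => weight B = w ∧ dsc B = W))
        = ((univ : Finset (Fin n → Bool)).filter
            (fun B => weight B = w ∧ (dsc B : ℤ) ≤ (W : ℤ)))
          \ ((univ : Finset (Fin n → Bool)).filter
            (fun B => weight B = w ∧ (dsc B : ℤ) ≤ (W : ℤ) - 1)) := by
      ext B
      simp only [Finset.mem_filter, Finset.mem_univ, true_and, Finset.mem_sdiff]
      constructor
      · rintro ⟨h1, h2⟩
        exact ⟨⟨h1, by omega⟩, fun h => by omega⟩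
      · rintro ⟨⟨h1, h2⟩, h3⟩
        refine ⟨h1, ?_⟩
        have h4 : ¬ ((dsc B : ℤ) ≤ (W : ℤ) - 1) := fun h => h3 ⟨h1, h⟩
        omega
    have hsub : ((univ : Finset (Fin n → Bool)).filter
            (fun B => weight B = w ∧ (dsc B : ℤ) ≤ (W : ℤ) - 1))
        ⊆ ((univ : Finset (Fin n → Bool)).filter
            (fun B => weight B = w ∧ (dsc B : ℤ) ≤ (W : ℤ))) := by
      intro B hB
      simp only [Finset.mem_filter, Finset.mem_univ, true_and] at hB ⊢
      exact ⟨hB.1, by omega⟩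
    rw [heq, Finset.card_sdiff_of_subset hsub, count_eq_Q, count_eq_Q]
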